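/- Let H = ([r], E) be an undirected graph on r vertices, and let C_r be the collection of edge sets of Hamiltonian cycles of H. Then any two distinct elements of C_r have symmetric difference of size at least 4; consequently C_r is the set of size-r circuits of a sparse paving matroid of rank r on E (provided some r-subset of E is not a Hamiltonian cycle). -/

import Mathlib

open scoped symmDiff

variable {α : Type*} [DecidableEq α]

/-- `B` is the collection of bases of a matroid of rank `r` on ground set `E`. -/
def MatroidBases (E : Finset α) (r : ℕ) (B : Finset (Finset α)) : Prop :=
  B.Nonempty ∧ (∀ X ∈ B, X ⊆ E ∧ X.card = r) ∧
    ∀ X ∈ B, ∀ Y ∈ B, ∀ e ∈ X, ∃ f ∈ Y, insert f (X.erase e) ∈ B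

/-- A set is independent if it is contained in some basis. -/
def Indep (B : Finset (Finset α)) (X : Finset α) : Prop := ∃ Y ∈ B, X ⊆ Y

/-- A circuit is a minimal dependent subset of the ground set. -/
def Circuit (E : Finset α) (B : Finset (Finset α)) (C : Finset α) : Prop :=
  C ⊆ E ∧ ¬ Indep B C ∧ ∀ x ∈ C, Indep B (C.erase x)

/-- A paving matroid of rank `r`: every `(r-1)`-element subset of the ground set is independent. -/
def IsPaving (E : Finset α) (r : ℕ) (B : Finset (Finset α)) : Prop :=
  MatroidBases E r B ∧ ∀ X ⊆ E, X.card = r - 1 → Indep B X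

/-- A sparse paving matroid: a paving matroid in which any two distinct circuits of size `r`
have symmetric difference of size greater than 2. -/
def IsSparsePaving (E : Finset α) (r : ℕ) (B : Finset (Finset α)) : Prop :=
  IsPaving E r B ∧ ∀ C C' : Finset α, Circuit E B C → Circuit E B C' → C.card = r →
    C'.card = r → C ≠ C' → 2 < (C ∆ C').card

open SimpleGraph List Finset

section helpers


lemma countP_edges_eq' {V : Type*} [DecidableEq V] {G : SimpleGraph V} {u v : V}
    (p : G.Walk u v) (w : V) :
    p.edges.countP (fun e => w ∈ e) =
      p.support.dropLast.count w + p.support.tail.count w := by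
  induction p with
  | nil => simp
  | @cons u x v h q ih =>
    rw [Walk.edges_cons, List.countP_cons, Walk.support_cons,
        List.dropLast_cons_of_ne_nil q.support_ne_nil, List.tail_cons, ih]
    have h1 : q.support.count w = q.support.tail.count w + (if x = w then 1 else 0) := by
      conv_lhs => rw [q.support_eq_cons]
      rw [List.count_cons]; simp
    rw [h1]
    by_cases hu : u = w <;> by_cases hx : x = w <;>
      simp [hu, hx, Sym2.mem_iff, List.count_cons] <;>
      first
        | omega
        | exact absurd (hu.trans hx.symm) h.ne
        | exact ⟨fun h' => hu h'.symm, fun h' => hx h'.symm⟩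

lemma ham_deg_two {V : Type*} [DecidableEq V] {G : SimpleGraph V} {v : V}
    {p : G.Walk v v} (hp : p.IsHamiltonianCycle) (w : V) :
    (p.edges.toFinset.filter (fun e => w ∈ e)).card = 2 := by
  have hnd : p.edges.Nodup := hp.isCycle.isCircuit.isTrail.edges_nodup
  have key : p.edges.countP (fun e => w ∈ e) = 2 := by
    rw [countP_edges_eq']
    have ht : p.support.tail.count w = 1 :=
      (Walk.isHamiltonianCycle_iff_isCycle_and_support_count_tail_eq_one.mp hp).2 w
    have hlast : p.support.dropLast ++ [v] = p.support := by
      have h2 := p.getLast_support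
      conv_rhs => rw [← List.dropLast_append_getLast (l := p.support) (by simp)]
      rw [h2]
    have hc : p.support.count w = p.support.dropLast.count w + List.count w [v] := by
      conv_lhs => rw [← hlast]
      rw [List.count_append]
    by_cases hv : v = w
    · subst hv
      have h3 := hp.count_support_self
      simp only [List.count_singleton] at hc
      simp at hc
      omega
    · have h3 := hp.support_count_of_ne hv
      simp only [List.count_singleton] at hc
      rw [if_neg (by exact fun h => hv (by simpa using h))] at hc
      omega
  rw [← key]
  have h4 : Finset.filter (fun e => w ∈ e) p.edges.toFinset
      = (p.edges.filter (fun e => decide (w ∈ e))).toFinset := by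
    rw [List.toFinset_filter]
    apply Finset.filter_congr
    intro x _
    simp
  rw [h4, List.card_toFinset, (hnd.filter _).dedup, ← List.countP_eq_length_filter]

lemma ham_card_edges {V : Type*} [DecidableEq V] [Fintype V] {G : SimpleGraph V} {v : V}
    {p : G.Walk v v} (hp : p.IsHamiltonianCycle) :
    p.edges.toFinset.card = Fintype.card V := by
  rw [List.card_toFinset, hp.isCycle.isCircuit.isTrail.edges_nodup.dedup,
    Walk.length_edges, hp.length_eq]

lemma ham_symmDiff_ge {V : Type*} [DecidableEq V] [Fintype V] {G : SimpleGraph V} {v v' : V}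
    {p : G.Walk v v} {q : G.Walk v' v'} (hp : p.IsHamiltonianCycle)
    (hq : q.IsHamiltonianCycle) (hne : p.edges.toFinset ≠ q.edges.toFinset) :
    4 ≤ (p.edges.toFinset ∆ q.edges.toFinset).card := by
  set C := p.edges.toFinset with hC
  set C' := q.edges.toFinset with hC'
  have hcard : C.card = C'.card := by rw [hC, hC', ham_card_edges hp, ham_card_edges hq]
  have hsd : (C ∆ C').card = (C \ C').card + (C' \ C).card := by
    rw [symmDiff_def, sup_eq_union, card_union_of_disjoint disjoint_sdiff_sdiff]
  have heq : (C \ C').card = (C' \ C).card := card_sdiff_comm hcard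
  by_contra hlt
  push_neg at hlt
  have hpos : (C \ C').Nonempty := by
    rw [Finset.nonempty_iff_ne_empty]
    intro h0
    apply hne
    have h1 : C ⊆ C' := by rwa [← Finset.sdiff_eq_empty_iff_subset]
    exact Finset.eq_of_subset_of_card_le h1 hcard.ge
  have h1 : (C \ C').card = 1 := by
    have := Finset.card_pos.mpr hpos
    omega
  have h1' : (C' \ C).card = 1 := by omega
  obtain ⟨e, he⟩ := Finset.card_eq_one.mp h1
  obtain ⟨e', he'⟩ := Finset.card_eq_one.mp h1'
  have heC : e ∈ C ∧ e ∉ C' := by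
    have : e ∈ C \ C' := he ▸ Finset.mem_singleton_self e
    exact ⟨(Finset.mem_sdiff.mp this).1, (Finset.mem_sdiff.mp this).2⟩
  have heC' : e' ∈ C' ∧ e' ∉ C := by
    have : e' ∈ C' \ C := he' ▸ Finset.mem_singleton_self e'
    exact ⟨(Finset.mem_sdiff.mp this).1, (Finset.mem_sdiff.mp this).2⟩
  have hinter : C.erase e = C'.erase e' := by
    rw [← Finset.sdiff_singleton_eq_erase, ← Finset.sdiff_singleton_eq_erase, ← he, ← he',
      Finset.sdiff_sdiff_self_left, Finset.sdiff_sdiff_self_left, Finset.inter_comm]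
  have hediag : ¬ e.IsDiag :=
    G.not_isDiag_of_mem_edgeSet (p.edges_subset_edgeSet (by simpa [hC] using heC.1))
  obtain ⟨a, b, rfl⟩ : ∃ a b, e = s(a, b) := by
    induction e using Sym2.ind with
    | _ a b => exact ⟨a, b, rfl⟩
  have hab : a ≠ b := by simpa [Sym2.isDiag_iff_proj_eq] using hediag
  have degC : ∀ w, (C.filter (fun f => w ∈ f)).card = 2 := fun w => ham_deg_two hp w
  have degC' : ∀ w, (C'.filter (fun f => w ∈ f)).card = 2 := fun w => ham_deg_two hq w
  have key : ∀ w, w ∈ s(a, b) → w ∈ e' := by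
    intro w hw
    have hde : ((C.erase s(a, b)).filter (fun f => w ∈ f)).card = 1 := by
      rw [Finset.filter_erase, Finset.card_erase_of_mem (Finset.mem_filter.mpr ⟨heC.1, hw⟩),
        degC]
    by_contra hwe'
    have h5 : ((C'.erase e').filter (fun f => w ∈ f)).card = 2 := by
      rw [Finset.filter_erase]
      have hnm : e' ∉ Finset.filter (fun f => w ∈ f) C' :=
        fun hmem => hwe' (Finset.mem_filter.mp hmem).2
      rw [Finset.erase_eq_of_notMem hnm]
      exact degC' w
    rw [← hinter, hde] at h5
    exact absurd h5 (by norm_num)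
  have : e' = s(a, b) := (Sym2.mem_and_mem_iff hab).mp ⟨key a (by simp), key b (by simp)⟩
  exact heC.2 (this ▸ heC'.1)

end helpers

set_option maxHeartbeats 1000000 in

open scoped Classical in
theorem stmt8 (r : ℕ) (H : SimpleGraph (Fin r)) [DecidableRel H.Adj]
    (Cr : Finset (Finset (Sym2 (Fin r))))
    (hCr : Cr = H.edgeFinset.powerset.filter
      (fun C => ∃ (v : Fin r) (p : H.Walk v v), p.IsHamiltonianCycle ∧ C = p.edges.toFinset))
    (B : Finset (Finset (Sym2 (Fin r))))
    (hB : B = (H.edgeFinset.powersetCard r).filter (fun X => X ∉ Cr))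
    (hBne : B.Nonempty) :
    (∀ C ∈ Cr, ∀ C' ∈ Cr, C ≠ C' → 4 ≤ (C ∆ C').card) ∧
      IsSparsePaving H.edgeFinset r B ∧
      (∀ C : Finset (Sym2 (Fin r)), C ∈ Cr ↔ (Circuit H.edgeFinset B C ∧ C.card = r)) := by
  set E := H.edgeFinset with hE
  have hCrMem : ∀ C : Finset (Sym2 (Fin r)), C ∈ Cr ↔ C ⊆ E ∧
      ∃ (v : Fin r) (p : H.Walk v v), p.IsHamiltonianCycle ∧ C = p.edges.toFinset := by
    intro C
    rw [hCr, Finset.mem_filter, Finset.mem_powerset]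
  have hBMem : ∀ X : Finset (Sym2 (Fin r)), X ∈ B ↔ X ⊆ E ∧ X.card = r ∧ X ∉ Cr := by
    intro X
    rw [hB, Finset.mem_filter, Finset.mem_powersetCard]
    tauto
  have hCrCard : ∀ C ∈ Cr, C.card = r := by
    intro C hC
    obtain ⟨-, v, p, hp, rfl⟩ := (hCrMem C).mp hC
    rw [ham_card_edges hp, Fintype.card_fin]
  have four : ∀ C ∈ Cr, ∀ C' ∈ Cr, C ≠ C' → 4 ≤ (C ∆ C').card := by
    intro C hC C' hC' hne
    obtain ⟨-, v, p, hp, rfl⟩ := (hCrMem C).mp hC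
    obtain ⟨-, v', p', hp', rfl⟩ := (hCrMem C').mp hC'
    exact ham_symmDiff_ge hp hp' hne
  have notboth : ∀ Z : Finset (Sym2 (Fin r)), Z ⊆ E → Z.card + 1 = r →
      ∀ f1 f2 : Sym2 (Fin r), f1 ∈ E → f2 ∈ E → f1 ∉ Z → f2 ∉ Z → f1 ≠ f2 →
      insert f1 Z ∈ B ∨ insert f2 Z ∈ B := by
    intro Z hZE hZc f1 f2 hf1E hf2E hf1 hf2 hf12
    have hs1 : insert f1 Z ⊆ E := Finset.insert_subset hf1E hZE
    have hs2 : insert f2 Z ⊆ E := Finset.insert_subset hf2E hZE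
    have hc1 : (insert f1 Z).card = r := by rw [Finset.card_insert_of_notMem hf1]; omega
    have hc2 : (insert f2 Z).card = r := by rw [Finset.card_insert_of_notMem hf2]; omega
    by_contra hcon
    push_neg at hcon
    have h1 : insert f1 Z ∈ Cr := by
      by_contra h
      exact hcon.1 ((hBMem _).mpr ⟨hs1, hc1, h⟩)
    have h2 : insert f2 Z ∈ Cr := by
      by_contra h
      exact hcon.2 ((hBMem _).mpr ⟨hs2, hc2, h⟩)
    have hne12 : insert f1 Z ≠ insert f2 Z := by
      intro h
      have hmem : f1 ∈ insert f2 Z := h ▸ Finset.mem_insert_self f1 Z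
      rcases Finset.mem_insert.mp hmem with h' | h'
      · exact hf12 h'
      · exact hf1 h'
    have hsub1 : insert f1 Z \ insert f2 Z ⊆ {f1} := by
      refine (Finset.sdiff_subset_sdiff (Finset.Subset.refl _)
        (Finset.subset_insert f2 Z)).trans ?_
      rw [Finset.insert_sdiff_cancel hf1]
    have hsub2 : insert f2 Z \ insert f1 Z ⊆ {f2} := by
      refine (Finset.sdiff_subset_sdiff (Finset.Subset.refl _)
        (Finset.subset_insert f1 Z)).trans ?_
      rw [Finset.insert_sdiff_cancel hf2]
    have h4 := four _ h1 _ h2 hne12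
    rw [symmDiff_def, sup_eq_union] at h4
    have h5 := (Finset.card_union_le (insert f1 Z \ insert f2 Z) (insert f2 Z \ insert f1 Z))
    have h6 := Finset.card_le_card hsub1
    have h7 := Finset.card_le_card hsub2
    simp only [Finset.card_singleton] at h6 h7
    omega
  -- bases have the right size
  have base2 : ∀ X ∈ B, X ⊆ E ∧ X.card = r := by
    intro X hX
    have := (hBMem X).mp hX
    exact ⟨this.1, this.2.1⟩
  -- exchange property
  have exch : ∀ X ∈ B, ∀ Y ∈ B, ∀ e ∈ X, ∃ f ∈ Y, insert f (X.erase e) ∈ B := by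
    intro X hX Y hY e heX
    obtain ⟨hXE, hXc⟩ := base2 X hX
    obtain ⟨hYE, hYc⟩ := base2 Y hY
    by_cases heY : e ∈ Y
    · exact ⟨e, heY, by rwa [Finset.insert_erase heX]⟩
    · have heXY : e ∈ X \ Y := Finset.mem_sdiff.mpr ⟨heX, heY⟩
      have hcXY : (X \ Y).card = (Y \ X).card := card_sdiff_comm (hXc.trans hYc.symm)
      have hZc : (X.erase e).card + 1 = r := by
        rw [Finset.card_erase_of_mem heX]
        have : 1 ≤ X.card := Finset.card_pos.mpr ⟨e, heX⟩
        omega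
      have hZE : X.erase e ⊆ E := (Finset.erase_subset _ _).trans hXE
      by_cases h2 : 1 < (Y \ X).card
      · obtain ⟨f1, hf1, f2, hf2, hf12⟩ := Finset.one_lt_card.mp h2
        obtain ⟨hf1Y, hf1X⟩ := Finset.mem_sdiff.mp hf1
        obtain ⟨hf2Y, hf2X⟩ := Finset.mem_sdiff.mp hf2
        have hf1Z : f1 ∉ X.erase e := fun h => hf1X (Finset.erase_subset _ _ h)
        have hf2Z : f2 ∉ X.erase e := fun h => hf2X (Finset.erase_subset _ _ h)
        rcases notboth _ hZE hZc f1 f2 (hYE hf1Y) (hYE hf2Y) hf1Z hf2Z hf12 with h | h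
        · exact ⟨f1, hf1Y, h⟩
        · exact ⟨f2, hf2Y, h⟩
      · have hc1 : (Y \ X).card = 1 := by
          have : 1 ≤ (X \ Y).card := Finset.card_pos.mpr ⟨e, heXY⟩
          omega
        obtain ⟨f, hf⟩ := Finset.card_eq_one.mp hc1
        have hfYX : f ∈ Y \ X := hf ▸ Finset.mem_singleton_self f
        obtain ⟨hfY, hfX⟩ := Finset.mem_sdiff.mp hfYX
        have hXYe : X \ Y = {e} := by
          rw [← hcXY] at hc1
          obtain ⟨w, hw⟩ := Finset.card_eq_one.mp hc1
          have : e ∈ ({w} : Finset _) := hw ▸ heXY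
          rw [Finset.mem_singleton] at this
          rw [hw, this]
        have hYsub : Y ⊆ insert f (X.erase e) := by
          intro y hy
          by_cases hyX : y ∈ X
          · have hyne : y ≠ e := fun h => heY (h ▸ hy)
            exact Finset.mem_insert_of_mem (Finset.mem_erase.mpr ⟨hyne, hyX⟩)
          · have hyf : y ∈ Y \ X := Finset.mem_sdiff.mpr ⟨hy, hyX⟩
            rw [hf, Finset.mem_singleton] at hyf
            exact hyf ▸ Finset.mem_insert_self _ _
        have hcle : (insert f (X.erase e)).card ≤ Y.card := by
          have := Finset.card_insert_le f (X.erase e)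
          omega
        have hYeq : insert f (X.erase e) = Y :=
          (Finset.eq_of_subset_of_card_le hYsub hcle).symm
        exact ⟨f, hfY, by rwa [hYeq]⟩
  -- paving
  have pav : ∀ X ⊆ E, X.card = r - 1 → Indep B X := by
    intro X hXE hXc
    rcases Nat.eq_zero_or_pos r with hr | hr
    · obtain ⟨Y, hY⟩ := hBne
      have hX0 : X = ∅ := Finset.card_eq_zero.mp (by omega)
      exact ⟨Y, hY, hX0 ▸ Finset.empty_subset Y⟩
    · have hXc' : X.card + 1 = r := by omega
      obtain ⟨Y, hY⟩ := hBne
      obtain ⟨hYE, hYc⟩ := base2 Y hY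
      have hEc : r ≤ E.card := by have := Finset.card_le_card hYE; omega
      have hEX : (E \ X).card = E.card - X.card := Finset.card_sdiff_of_subset hXE
      by_cases h2 : 1 < (E \ X).card
      · obtain ⟨f1, hf1, f2, hf2, hf12⟩ := Finset.one_lt_card.mp h2
        obtain ⟨hf1E, hf1X⟩ := Finset.mem_sdiff.mp hf1
        obtain ⟨hf2E, hf2X⟩ := Finset.mem_sdiff.mp hf2
        rcases notboth X hXE hXc' f1 f2 hf1E hf2E hf1X hf2X hf12 with h | h
        · exact ⟨_, h, Finset.subset_insert _ _⟩
        · exact ⟨_, h, Finset.subset_insert _ _⟩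
      · have hEcard : E.card ≤ r := by omega
        have hYE' : Y = E := Finset.eq_of_subset_of_card_le hYE (by omega)
        exact ⟨Y, hY, hYE' ▸ hXE⟩
  -- circuit characterization
  have circ : ∀ C : Finset (Sym2 (Fin r)), C ∈ Cr ↔ Circuit E B C ∧ C.card = r := by
    intro C
    constructor
    · intro hC
      have hCc := hCrCard C hC
      have hCE := ((hCrMem C).mp hC).1
      refine ⟨⟨hCE, ?_, ?_⟩, hCc⟩
      · rintro ⟨Y, hY, hCY⟩
        obtain ⟨hYE, hYc⟩ := base2 Y hY
        have hCYeq : C = Y := Finset.eq_of_subset_of_card_le hCY (by omega)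
        subst hCYeq
        exact ((hBMem C).mp hY).2.2 hC
      · intro x hx
        apply pav
        · exact (Finset.erase_subset _ _).trans hCE
        · rw [Finset.card_erase_of_mem hx, hCc]
    · rintro ⟨⟨hCE, hdep, -⟩, hCc⟩
      by_contra hC
      exact hdep ⟨C, (hBMem C).mpr ⟨hCE, hCc, hC⟩, Finset.Subset.refl C⟩
  refine ⟨four, ⟨⟨⟨hBne, base2, exch⟩, pav⟩, ?_⟩, circ⟩
  intro C C' hC hC' hCc hC'c hne
  have h4 := four C ((circ C).mpr ⟨hC, hCc⟩) C' ((circ C').mpr ⟨hC', hC'c⟩) hne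
  omega
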